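/- Let γ : ℝ → ℝ² be a smooth unit-speed self-shrinking curve. Then either the image of γ is contained in a straight line through the origin, or H(t)² > 0 for every t and sup_t |γ(t)|² < ∞. -/

import Mathlib

noncomputable section
open Real MeasureTheory
open scoped RealInnerProductSpace

abbrev E2 := EuclideanSpace ℝ (Fin 2)

/-- The unit normal of a unit-speed plane curve: `γ′` rotated by `−π/2`. -/
def normal (γ : ℝ → E2) (t : ℝ) : E2 := WithLp.toLp 2 ![deriv γ t 1, -(deriv γ t 0)]

/-- The curvature `H = −⟨γ″, n⟩` of a unit-speed plane curve. -/
def curv (γ : ℝ → E2) (t : ℝ) : ℝ := -⟪deriv (deriv γ) t, normal γ t⟫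

private lemma hasDerivAt_proj {f : ℝ → E2} (hf : Differentiable ℝ f) (i : Fin 2) (t : ℝ) :
    HasDerivAt (fun s => f s i) (deriv f t i) t := by
  exact
    (EuclideanSpace.proj i).hasFDerivAt.comp_hasDerivAt t (hf t).hasDerivAt

/-- A smooth unit-speed self-shrinking curve in the plane either lies on
a straight line through the origin, or has nowhere-vanishing curvature and bounded image. -/
theorem stmt17 (γ : ℝ → E2) (hγ : ContDiff ℝ (⊤ : ℕ∞) γ)
    (hunit : ∀ t, ‖deriv γ t‖ = 1)
    (hshrink : ∀ t, curv γ t = ⟪γ t, normal γ t⟫ / 2) :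
    (∃ w : E2, w ≠ 0 ∧ ∀ t : ℝ, ∃ c : ℝ, γ t = c • w) ∨
    ((∀ t : ℝ, 0 < curv γ t ^ 2) ∧ ∃ M : ℝ, ∀ t : ℝ, ‖γ t‖ ^ 2 ≤ M) := by
  have hγ1 : Differentiable ℝ γ := hγ.differentiable (by simp)
  have hγ2 : Differentiable ℝ (deriv γ) :=
    (contDiff_infty_iff_deriv.mp hγ).2.differentiable (by simp)
  have hp0 := hasDerivAt_proj hγ1 0
  have hp1 := hasDerivAt_proj hγ1 1
  have hv0 := hasDerivAt_proj hγ2 0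
  have hv1 := hasDerivAt_proj hγ2 1
  -- unit speed, componentwise
  have hunit2 : ∀ t, deriv γ t 0 ^ 2 + deriv γ t 1 ^ 2 = 1 := by
    intro t
    have h : ‖deriv γ t‖ ^ 2 = 1 := by rw [hunit t]; norm_num
    rw [EuclideanSpace.norm_eq, Real.sq_sqrt (by positivity)] at h
    simpa [Fin.sum_univ_two, sq_abs] using h
  -- orthogonality of γ′ and γ″
  have horth : ∀ t, deriv γ t 0 * deriv (deriv γ) t 0
      + deriv γ t 1 * deriv (deriv γ) t 1 = 0 := by
    intro t
    have h : HasDerivAt (fun s => deriv γ s 0 ^ 2 + deriv γ s 1 ^ 2)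
        (2 * deriv γ t 0 ^ 1 * deriv (deriv γ) t 0
          + 2 * deriv γ t 1 ^ 1 * deriv (deriv γ) t 1) t := by
      exact_mod_cast ((hv0 t).pow 2).add ((hv1 t).pow 2)
    have hconst : (fun s => deriv γ s 0 ^ 2 + deriv γ s 1 ^ 2) = fun _ => (1 : ℝ) :=
      funext hunit2
    rw [hconst] at h
    have h0 := h.unique (hasDerivAt_const t 1)
    simp at h0
    linarith
  -- curvature formula
  have hcurv : ∀ t, curv γ t
      = deriv γ t 0 * deriv (deriv γ) t 1 - deriv γ t 1 * deriv (deriv γ) t 0 := by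
    intro t
    simp only [curv, normal, PiLp.inner_apply, RCLike.inner_apply, conj_trivial,
      Fin.sum_univ_two, Matrix.cons_val_zero, Matrix.cons_val_one, Matrix.head_cons]
    ring
  have hq : ∀ t, ⟪γ t, normal γ t⟫
      = γ t 0 * deriv γ t 1 - γ t 1 * deriv γ t 0 := by
    intro t
    simp only [normal, PiLp.inner_apply, RCLike.inner_apply, conj_trivial,
      Fin.sum_univ_two, Matrix.cons_val_zero, Matrix.cons_val_one, Matrix.head_cons]
    ring
  have hKq : ∀ t, γ t 0 * deriv γ t 1 - γ t 1 * deriv γ t 0 = 2 * curv γ t := by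
    intro t; rw [hshrink t, hq t]; ring
  -- second derivative components
  have hdd0e : ∀ t, deriv (deriv γ) t 0 = -(curv γ t * deriv γ t 1) := by
    intro t
    have h1 := hunit2 t; have h2 := horth t; have h3 := hcurv t
    linear_combination deriv γ t 0 * h2 - deriv (deriv γ) t 0 * h1 + deriv γ t 1 * h3
  have hdd1e : ∀ t, deriv (deriv γ) t 1 = curv γ t * deriv γ t 0 := by
    intro t
    have h1 := hunit2 t; have h2 := horth t; have h3 := hcurv t
    linear_combination deriv γ t 1 * h2 - deriv (deriv γ) t 1 * h1 - deriv γ t 0 * h3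
  -- curv as a differentiable expression
  have hHfun : curv γ = fun t => (γ t 0 * deriv γ t 1 - γ t 1 * deriv γ t 0) / 2 := by
    funext t; rw [hshrink t, hq t]
  -- derivative of curvature: H' = H f / 2
  have hHder : ∀ t, HasDerivAt (curv γ)
      (curv γ t * (γ t 0 * deriv γ t 0 + γ t 1 * deriv γ t 1) / 2) t := by
    intro t
    have h : HasDerivAt (fun s => (γ s 0 * deriv γ s 1 - γ s 1 * deriv γ s 0) / 2)
        ((deriv γ t 0 * deriv γ t 1 + γ t 0 * deriv (deriv γ) t 1
          - (deriv γ t 1 * deriv γ t 0 + γ t 1 * deriv (deriv γ) t 0)) / 2) t :=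
      (((hp0 t).mul (hv1 t)).sub ((hp1 t).mul (hv0 t))).div_const 2
    rw [← hHfun] at h
    convert h using 1
    rw [hdd0e t, hdd1e t]; ring
  -- derivative of |γ|²
  have hXder : ∀ t, HasDerivAt (fun s => γ s 0 ^ 2 + γ s 1 ^ 2)
      (2 * (γ t 0 * deriv γ t 0 + γ t 1 * deriv γ t 1)) t := by
    intro t
    have h := ((hp0 t).fun_pow 2).fun_add ((hp1 t).fun_pow 2)
    refine h.congr_deriv ?_
    push_cast
    ring
  -- the conserved quantity A = H² exp(-|γ|²/2)
  have hAder : ∀ t, HasDerivAt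
      (fun s => curv γ s ^ 2 * Real.exp (-(γ s 0 ^ 2 + γ s 1 ^ 2) / 2)) 0 t := by
    intro t
    have h := (((hHder t).fun_pow 2).fun_mul (((hXder t).fun_neg.div_const 2).exp))
    refine h.congr_deriv ?_
    push_cast
    ring
  have hAconst : ∀ t, curv γ t ^ 2 * Real.exp (-(γ t 0 ^ 2 + γ t 1 ^ 2) / 2)
      = curv γ 0 ^ 2 * Real.exp (-(γ 0 0 ^ 2 + γ 0 1 ^ 2) / 2) := by
    intro t
    exact is_const_of_deriv_eq_zero (fun s => (hAder s).differentiableAt)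
      (fun s => (hAder s).deriv) t 0
  by_cases h0 : curv γ 0 = 0
  · -- line case
    left
    have hH0 : ∀ t, curv γ t = 0 := by
      intro t
      have h2 := hAconst t
      rw [h0] at h2
      simp only [ne_eq, OfNat.ofNat_ne_zero, not_false_eq_true, zero_pow, zero_mul] at h2
      rcases mul_eq_zero.mp h2 with h | h
      · exact pow_eq_zero_iff two_ne_zero |>.mp h
      · exact absurd h (Real.exp_pos _).ne'
    have hderconst : ∀ t, deriv γ t = deriv γ 0 := by
      have c0 : ∀ t, deriv γ t 0 = deriv γ 0 0 := fun t =>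
        is_const_of_deriv_eq_zero (fun s => (hv0 s).differentiableAt)
          (fun s => by rw [(hv0 s).deriv, hdd0e s, hH0 s]; ring) t 0
      have c1 : ∀ t, deriv γ t 1 = deriv γ 0 1 := fun t =>
        is_const_of_deriv_eq_zero (fun s => (hv1 s).differentiableAt)
          (fun s => by rw [(hv1 s).deriv, hdd1e s, hH0 s]; ring) t 0
      intro t
      ext i
      fin_cases i
      · exact c0 t
      · exact c1 t
    refine ⟨deriv γ 0, ?_, fun t => ⟨γ t 0 * deriv γ t 0 + γ t 1 * deriv γ t 1, ?_⟩⟩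
    · intro h
      have h1 := hunit 0
      rw [h, norm_zero] at h1
      norm_num at h1
    · have hqz : γ t 0 * deriv γ t 1 - γ t 1 * deriv γ t 0 = 0 := by
        rw [hKq t, hH0 t]; ring
      have e0 : γ t 0 = (γ t 0 * deriv γ t 0 + γ t 1 * deriv γ t 1) * deriv γ t 0 := by
        linear_combination (-(γ t 0)) * hunit2 t + deriv γ t 1 * hqz
      have e1 : γ t 1 = (γ t 0 * deriv γ t 0 + γ t 1 * deriv γ t 1) * deriv γ t 1 := by
        linear_combination (-(γ t 1)) * hunit2 t - deriv γ t 0 * hqz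
      have hvec : γ t = (γ t 0 * deriv γ t 0 + γ t 1 * deriv γ t 1) • deriv γ t := by
        ext i
        fin_cases i
        · simpa using e0
        · simpa using e1
      rw [hderconst t] at hvec
      simpa [hderconst t] using hvec
  · -- bounded case
    right
    have hA0 : 0 < curv γ 0 ^ 2 * Real.exp (-(γ 0 0 ^ 2 + γ 0 1 ^ 2) / 2) :=
      mul_pos ((sq_nonneg _).lt_of_ne fun h =>
        h0 (pow_eq_zero_iff two_ne_zero |>.mp h.symm)) (Real.exp_pos _)
    have hnorm : ∀ t, ‖γ t‖ ^ 2 = γ t 0 ^ 2 + γ t 1 ^ 2 := by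
      intro t
      rw [EuclideanSpace.norm_eq, Real.sq_sqrt (by positivity)]
      simp [Fin.sum_univ_two, sq_abs]
    constructor
    · intro t
      have h2 := hAconst t
      nlinarith [Real.exp_pos (-(γ t 0 ^ 2 + γ t 1 ^ 2) / 2), sq_nonneg (curv γ t)]
    · obtain ⟨A0, hA0def⟩ : ∃ a : ℝ,
          a = curv γ 0 ^ 2 * Real.exp (-(γ 0 0 ^ 2 + γ 0 1 ^ 2) / 2) := ⟨_, rfl⟩
      rw [← hA0def] at hAconst hA0
      refine ⟨3 / A0, fun t => ?_⟩
      obtain ⟨X, hXdef⟩ : ∃ x : ℝ, x = γ t 0 ^ 2 + γ t 1 ^ 2 := ⟨_, rfl⟩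
      have hXnn : 0 ≤ X := by rw [hXdef]; positivity
      have hA2 := hAconst t
      rw [← hXdef] at hA2
      -- H² = A0 exp(X/2)
      have hKsq : curv γ t ^ 2 = A0 * Real.exp (X / 2) := by
        have he : Real.exp (-X / 2) * Real.exp (X / 2) = 1 := by
          rw [← Real.exp_add]; ring_nf; exact Real.exp_zero
        calc curv γ t ^ 2 = curv γ t ^ 2 * (Real.exp (-X / 2) * Real.exp (X / 2)) := by
              rw [he]; ring
          _ = A0 * Real.exp (X / 2) := by rw [← mul_assoc, hA2]
      -- 4H² ≤ X  (Lagrange)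
      have hle : 4 * curv γ t ^ 2 ≤ X := by
        have h1 := hunit2 t
        have h2 := hKq t
        have lag : γ t 0 ^ 2 + γ t 1 ^ 2
            = (γ t 0 * deriv γ t 0 + γ t 1 * deriv γ t 1) ^ 2 + (2 * curv γ t) ^ 2 := by
          linear_combination (-(γ t 0 ^ 2 + γ t 1 ^ 2)) * h1
            + (γ t 0 * deriv γ t 1 - γ t 1 * deriv γ t 0 + 2 * curv γ t) * h2
        rw [hXdef, lag]
        nlinarith [sq_nonneg (γ t 0 * deriv γ t 0 + γ t 1 * deriv γ t 1)]
      -- exp(X/2) ≥ X²/12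
      have hexp : X ^ 2 / 12 ≤ Real.exp (X / 2) := by
        have h1 : X / 6 + 1 ≤ Real.exp (X / 6) := Real.add_one_le_exp _
        have h2 : (X / 6 + 1) ^ 3 ≤ Real.exp (X / 6) ^ 3 :=
          pow_le_pow_left₀ (by positivity) h1 3
        have h3 : Real.exp (X / 6) ^ 3 = Real.exp (X / 2) := by
          rw [← Real.exp_nat_mul]
          congr 1
          push_cast
          ring
        nlinarith [sq_nonneg (X / 6), pow_nonneg hXnn 3]
      have key : A0 * X ^ 2 ≤ 3 * X := by
        have h4 := mul_le_mul_of_nonneg_left hexp hA0.le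
        nlinarith [hKsq, hle]
      rw [hnorm t, ← hXdef, le_div_iff₀ hA0]
      rcases hXnn.eq_or_lt with h | h
      · rw [← h]; norm_num
      · nlinarith [key, h]
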